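/- Let μ be an unconditional probability measure on ℝ^n, X distributed according to μ, and for ℓ ≤ n let M_ℓ be the essential supremum of (Σ_{i=1}^ℓ (x_i^2)^*)^{1/2}, the ℓ_2 norm of the ℓ largest coordinates of X in absolute value. Then for every subset I ⊂ {1,...,n} and every vector v supported on I, the ψ_2 norm of ⟨v, X⟩ satisfies ‖⟨v,·⟩‖_{ψ_2} ≤ C ‖v‖_{ℓ_∞} M_{|I|}, where C is an absolute constant. -/

import Mathlib

open MeasureTheory

/-- The `ψ₂` (subgaussian) norm of a function `f` with respect to a measure `μ`. -/
noncomputable def psiTwoNorm {α : Type*} [MeasurableSpace α] (μ : Measure α)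
    (f : α → ℝ) : ℝ :=
  sInf {c : ℝ | 0 < c ∧ ∫ x, Real.exp (f x ^ 2 / c ^ 2) ∂μ ≤ 2}

/-- The sum of the `ℓ` largest squared coordinates of `x`:
`Σ_{i=1}^ℓ (x_i^2)^* = sup_{|I| = ℓ} Σ_{i ∈ I} x_i^2`. -/
noncomputable def topSqSum {n : ℕ} (x : Fin n → ℝ) (ℓ : ℕ) : ℝ :=
  ⨆ I : {I : Finset (Fin n) // I.card = ℓ}, ∑ i ∈ I.1, x i ^ 2

/-- A measure `μ` on `ℝ^n` is unconditional if it is invariant under sign flips of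
the coordinates. -/
def IsUncondMeasure {n : ℕ} (μ : Measure (Fin n → ℝ)) : Prop :=
  ∀ s : Fin n → ℝ, (∀ i, s i = 1 ∨ s i = -1) →
    Measure.map (fun x i => s i * x i) μ = μ

/- ### Auxiliary lemmas -/

lemma gauss_integrable (b : ℝ) :
    Integrable (fun x : ℝ => Real.exp (b * x - x ^ 2 / 2)) := by
  have key : ∀ x : ℝ, b * x - x ^ 2 / 2
      = Real.exp (b ^ 2 / 2) • 0 + (b ^ 2 / 2 + -(1 / 2) * (x - b) ^ 2) - Real.exp (b^2/2) • 0 := by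
    intro x; simp; ring
  have h1 : Integrable (fun x : ℝ => Real.exp (-(1/2 : ℝ) * x ^ 2)) :=
    integrable_exp_neg_mul_sq (by norm_num)
  have h2 : Integrable (fun x : ℝ => Real.exp (-(1/2 : ℝ) * (x - b) ^ 2)) :=
    h1.comp_sub_right b
  have := (h2.const_mul (Real.exp (b ^ 2 / 2)))
  refine this.congr ?_
  filter_upwards with x
  rw [← Real.exp_add]
  ring_nf

lemma gauss_mgf (b : ℝ) :
    ∫ x : ℝ, Real.exp (b * x - x ^ 2 / 2)
      = Real.sqrt (2 * Real.pi) * Real.exp (b ^ 2 / 2) := by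
  have key : ∀ x : ℝ, Real.exp (b * x - x ^ 2 / 2)
      = Real.exp (b ^ 2 / 2) * Real.exp (-(1/2 : ℝ) * (x - b) ^ 2) := by
    intro x; rw [← Real.exp_add]; ring_nf
  simp_rw [key]
  rw [integral_const_mul, integral_sub_right_eq_self (fun x => Real.exp (-(1/2 : ℝ) * x ^ 2)) b,
    integral_gaussian]
  rw [show Real.pi / (1/2 : ℝ) = 2 * Real.pi by ring]
  ring

/-- Average over sign patterns of `exp((Σ εᵢ aᵢ)²/c²)` is at most `2`,
provided `Σ aᵢ² ≤ c²/4`. -/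
lemma rademacher_avg (n : ℕ) (a : Fin n → ℝ) (c : ℝ) (hc : 0 < c)
    (hσ : ∑ i, a i ^ 2 ≤ c ^ 2 / 4) :
    ∑ ε : Fin n → Bool,
        Real.exp ((∑ i, (if ε i then (1 : ℝ) else -1) * a i) ^ 2 / c ^ 2)
      ≤ 2 ^ n * 2 := by
  have hπ : 0 < Real.pi := Real.pi_pos
  have hZ : (0 : ℝ) < Real.sqrt (2 * Real.pi) := Real.sqrt_pos.2 (by linarith)
  -- step 1: Gaussian representation of each summand
  have hrep : ∀ ε : Fin n → Bool,
      Real.exp ((∑ i, (if ε i then (1 : ℝ) else -1) * a i) ^ 2 / c ^ 2)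
        = (Real.sqrt (2 * Real.pi))⁻¹ *
          ∫ x : ℝ, Real.exp ((Real.sqrt 2 * (∑ i, (if ε i then (1 : ℝ) else -1) * a i) / c) * x
            - x ^ 2 / 2) := by
    intro ε
    set S := ∑ i, (if ε i then (1 : ℝ) else -1) * a i with hS
    rw [gauss_mgf]
    have : (Real.sqrt 2 * S / c) ^ 2 / 2 = S ^ 2 / c ^ 2 := by
      rw [mul_div_assoc, mul_pow, Real.sq_sqrt (by norm_num : (0:ℝ) ≤ 2), div_pow]
      ring
    rw [this, ← mul_assoc, inv_mul_cancel₀ (ne_of_gt hZ), one_mul]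
  simp_rw [hrep]
  rw [← Finset.mul_sum,
    ← integral_finset_sum _ (fun ε _ => gauss_integrable _)]
  -- step 2: pointwise bound on the integrand
  have hpt : ∀ x : ℝ,
      (∑ ε : Fin n → Bool,
        Real.exp ((Real.sqrt 2 * (∑ i, (if ε i then (1 : ℝ) else -1) * a i) / c) * x
          - x ^ 2 / 2))
      ≤ 2 ^ n * Real.exp (-(1/4 : ℝ) * x ^ 2) := by
    intro x
    set lam := Real.sqrt 2 * x / c with hlam
    have hexp : ∀ ε : Fin n → Bool,
        Real.exp ((Real.sqrt 2 * (∑ i, (if ε i then (1 : ℝ) else -1) * a i) / c) * x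
          - x ^ 2 / 2)
        = (∏ i, Real.exp (lam * ((if ε i then (1 : ℝ) else -1) * a i)))
            * Real.exp (-(x ^ 2) / 2) := by
      intro ε
      rw [← Real.exp_sum, ← Real.exp_add, ← Finset.mul_sum]
      congr 1
      ring
    simp_rw [hexp, ← Finset.sum_mul]
    have hswap : (∑ ε : Fin n → Bool,
        ∏ i, Real.exp (lam * ((if ε i then (1 : ℝ) else -1) * a i)))
        = ∏ i, (Real.exp (lam * a i) + Real.exp (-(lam * a i))) := by
      rw [← Fintype.piFinset_univ, Finset.sum_prod_piFinset Finset.univ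
        (fun i b => Real.exp (lam * ((if b = true then (1:ℝ) else -1) * a i)))]
      refine Finset.prod_congr rfl fun i _ => ?_
      rw [Fintype.sum_bool]
      norm_num
    rw [hswap]
    have hcosh : ∀ i, Real.exp (lam * a i) + Real.exp (-(lam * a i))
        ≤ 2 * Real.exp ((lam * a i) ^ 2 / 2) := by
      intro i
      have := Real.cosh_le_exp_half_sq (lam * a i)
      rw [Real.cosh_eq] at this
      linarith
    have hprod : (∏ i, (Real.exp (lam * a i) + Real.exp (-(lam * a i))))
        ≤ ∏ i, 2 * Real.exp ((lam * a i) ^ 2 / 2) := by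
      refine Finset.prod_le_prod (fun i _ => ?_) (fun i _ => hcosh i)
      positivity
    have hprod2 : (∏ i, 2 * Real.exp ((lam * a i) ^ 2 / 2))
        = 2 ^ n * Real.exp (∑ i, (lam * a i) ^ 2 / 2) := by
      rw [Finset.prod_mul_distrib, Finset.prod_const, ← Real.exp_sum]
      simp
    have hsum : (∑ i, (lam * a i) ^ 2 / 2) ≤ x ^ 2 / 4 := by
      have hlam2 : lam ^ 2 = 2 * x ^ 2 / c ^ 2 := by
        rw [hlam, mul_div_assoc, mul_pow, Real.sq_sqrt (by norm_num : (0:ℝ) ≤ 2), div_pow]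
        ring
      have : (∑ i, (lam * a i) ^ 2 / 2) = lam ^ 2 / 2 * ∑ i, a i ^ 2 := by
        rw [Finset.mul_sum]
        refine Finset.sum_congr rfl fun i _ => ?_
        ring
      rw [this, hlam2]
      have hc2 : (0:ℝ) < c ^ 2 := by positivity
      have hx2 : (0:ℝ) ≤ x ^ 2 := sq_nonneg x
      calc 2 * x ^ 2 / c ^ 2 / 2 * ∑ i, a i ^ 2
          = x ^ 2 / c ^ 2 * ∑ i, a i ^ 2 := by ring
        _ ≤ x ^ 2 / c ^ 2 * (c ^ 2 / 4) := by
            refine mul_le_mul_of_nonneg_left hσ (by positivity)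
        _ = x ^ 2 / 4 := by field_simp
    calc (∏ i, (Real.exp (lam * a i) + Real.exp (-(lam * a i)))) * Real.exp (-(x ^ 2) / 2)
        ≤ (2 ^ n * Real.exp (x ^ 2 / 4)) * Real.exp (-(x ^ 2) / 2) := by
          refine mul_le_mul_of_nonneg_right ?_ (Real.exp_nonneg _)
          refine le_trans hprod ?_
          rw [hprod2]
          exact mul_le_mul_of_nonneg_left (Real.exp_le_exp.2 hsum) (by positivity)
      _ = 2 ^ n * Real.exp (-(1/4 : ℝ) * x ^ 2) := by
          rw [mul_assoc, ← Real.exp_add]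
          congr 2
          ring
  -- step 3: integrate the bound
  have hintL : Integrable (fun x : ℝ => ∑ ε : Fin n → Bool,
      Real.exp ((Real.sqrt 2 * (∑ i, (if ε i then (1 : ℝ) else -1) * a i) / c) * x
        - x ^ 2 / 2)) :=
    integrable_finset_sum _ (fun ε _ => gauss_integrable _)
  have hintR : Integrable (fun x : ℝ => (2 : ℝ) ^ n * Real.exp (-(1/4 : ℝ) * x ^ 2)) :=
    (integrable_exp_neg_mul_sq (by norm_num : (0:ℝ) < 1/4)).const_mul _
  have hmono := integral_mono hintL hintR hpt
  rw [integral_const_mul, integral_gaussian] at hmono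
  have hval : Real.sqrt (Real.pi / (1/4 : ℝ)) ≤ 2 * Real.sqrt (2 * Real.pi) := by
    rw [show Real.pi / (1/4 : ℝ) = 4 * Real.pi by ring]
    have h8 : Real.sqrt (4 * Real.pi) ≤ Real.sqrt (8 * Real.pi) :=
      Real.sqrt_le_sqrt (by linarith)
    have h4 : Real.sqrt (8 * Real.pi) = 2 * Real.sqrt (2 * Real.pi) := by
      rw [show (8 : ℝ) * Real.pi = 2 ^ 2 * (2 * Real.pi) by ring,
        Real.sqrt_mul (by positivity), Real.sqrt_sq (by norm_num)]
    linarith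
  calc (Real.sqrt (2 * Real.pi))⁻¹ *
      ∫ x : ℝ, ∑ ε : Fin n → Bool,
        Real.exp ((Real.sqrt 2 * (∑ i, (if ε i then (1 : ℝ) else -1) * a i) / c) * x
          - x ^ 2 / 2)
      ≤ (Real.sqrt (2 * Real.pi))⁻¹ * (2 ^ n * Real.sqrt (Real.pi / (1/4 : ℝ))) := by
        exact mul_le_mul_of_nonneg_left hmono (by positivity)
    _ ≤ (Real.sqrt (2 * Real.pi))⁻¹ * (2 ^ n * (2 * Real.sqrt (2 * Real.pi))) := by
        refine mul_le_mul_of_nonneg_left ?_ (by positivity)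
        exact mul_le_mul_of_nonneg_left hval (by positivity)
    _ = 2 ^ n * 2 := by
        field_simp

/-- for an unconditional measure, `‖⟨v,·⟩‖_{ψ₂} ≤ C ‖v‖_∞ M_{|I|}` for any
`v` supported on `I`, where `M_ℓ` is an essential bound on the `ℓ₂` norm of the `ℓ`
largest coordinates. -/
theorem psi2_bound_unconditional :
    ∃ C : ℝ, 0 < C ∧
      ∀ (n : ℕ), 0 < n → ∀ (μ : Measure (Fin n → ℝ)), IsProbabilityMeasure μ →
        IsUncondMeasure μ →
        ∀ (M : ℕ → ℝ),
          (∀ ℓ : ℕ, ℓ ≤ n → ∀ᵐ x ∂μ, Real.sqrt (topSqSum x ℓ) ≤ M ℓ) →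
          ∀ (I : Finset (Fin n)) (v : Fin n → ℝ), (∀ i ∉ I, v i = 0) →
            psiTwoNorm μ (fun x => ∑ i, v i * x i)
              ≤ C * (⨆ i : Fin n, |v i|) * M I.card := by
  refine ⟨2, by norm_num, ?_⟩
  intro n hn μ hprob hunc M hM I v hv
  set V : ℝ := ⨆ i : Fin n, |v i| with hV
  set L : ℕ := I.card with hL
  have hLn : L ≤ n := by
    simpa using Finset.card_le_univ I
  -- basic facts
  haveI : Nonempty (Fin n) := ⟨⟨0, hn⟩⟩
  have hVbdd : BddAbove (Set.range fun i : Fin n => |v i|) :=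
    (Set.finite_range _).bddAbove
  have hVi : ∀ i, |v i| ≤ V := fun i => le_ciSup hVbdd i
  have hV0 : 0 ≤ V := le_trans (abs_nonneg _) (hVi (Classical.arbitrary _))
  haveI : (ae μ).NeBot := ae_neBot.mpr (IsProbabilityMeasure.ne_zero μ)
  have hML0 : 0 ≤ M L := by
    obtain ⟨x, hx⟩ := (hM L hLn).exists
    exact le_trans (Real.sqrt_nonneg _) hx
  -- topSqSum facts
  have htop_ge : ∀ x : Fin n → ℝ, (∑ i ∈ I, x i ^ 2) ≤ topSqSum x L := by
    intro x
    have hbdd : BddAbove (Set.range fun J : {J : Finset (Fin n) // J.card = L} =>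
        ∑ i ∈ J.1, x i ^ 2) := (Set.finite_range _).bddAbove
    exact le_ciSup hbdd ⟨I, rfl⟩
  have hsum_eq : ∀ x : Fin n → ℝ, (∑ i, v i * x i) = ∑ i ∈ I, v i * x i := by
    intro x
    refine (Finset.sum_subset (Finset.subset_univ I) fun i _ hi => ?_).symm
    rw [hv i hi, zero_mul]
  set f : (Fin n → ℝ) → ℝ := fun x => ∑ i, v i * x i with hf
  have hfm : Measurable f := by
    have : f = fun x => ∑ i ∈ Finset.univ, (fun i (x : Fin n → ℝ) => v i * x i) i x := rfl
    rw [this]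
    exact Finset.measurable_sum Finset.univ
      (fun i _ => by fun_prop)
  by_cases hVM : V * M L = 0
  · -- degenerate case : f = 0 a.e., so every c > 0 is in the set
    have hae0 : ∀ᵐ x ∂μ, f x = 0 := by
      rcases mul_eq_zero.mp hVM with h | h
      · filter_upwards with x
        show (∑ i, v i * x i) = 0
        refine Finset.sum_eq_zero fun i _ => ?_
        have : |v i| ≤ 0 := h ▸ hVi i
        have : v i = 0 := abs_eq_zero.mp (le_antisymm this (abs_nonneg _))
        rw [this, zero_mul]
      · filter_upwards [hM L hLn] with x hx
        rw [h] at hx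
        have hts0 : topSqSum x L ≤ 0 := Real.sqrt_eq_zero'.mp (le_antisymm hx (Real.sqrt_nonneg _))
        have hsum0 : (∑ i ∈ I, x i ^ 2) = 0 := by
          have h1 : (0:ℝ) ≤ ∑ i ∈ I, x i ^ 2 := Finset.sum_nonneg fun i _ => sq_nonneg _
          linarith [htop_ge x]
        have hx0 : ∀ i ∈ I, x i = 0 := by
          intro i hi
          have := (Finset.sum_eq_zero_iff_of_nonneg fun j _ => sq_nonneg (x j)).mp hsum0 i hi
          exact pow_eq_zero_iff (by norm_num) |>.mp this
        show (∑ i, v i * x i) = 0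
        rw [hsum_eq x]
        exact Finset.sum_eq_zero fun i hi => by rw [hx0 i hi, mul_zero]
    have hmem : ∀ c : ℝ, 0 < c →
        c ∈ {c : ℝ | 0 < c ∧ ∫ x, Real.exp (f x ^ 2 / c ^ 2) ∂μ ≤ 2} := by
      intro c hc
      refine ⟨hc, ?_⟩
      have : ∫ x, Real.exp (f x ^ 2 / c ^ 2) ∂μ = ∫ _, (1:ℝ) ∂μ := by
        refine integral_congr_ae ?_
        filter_upwards [hae0] with x hx
        rw [hx]
        simp
      rw [this]
      simp
    have hrhs : 2 * V * M L = 0 := by rw [mul_assoc, hVM, mul_zero]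
    rw [psiTwoNorm, hrhs]
    by_contra hcon
    push_neg at hcon
    have hle := csInf_le ⟨0, fun y hy => le_of_lt hy.1⟩
      (hmem (sInf {c : ℝ | 0 < c ∧ ∫ x, Real.exp (f x ^ 2 / c ^ 2) ∂μ ≤ 2} / 2) (by linarith))
    linarith
  · -- main case
    have hVML : 0 < V * M L :=
      lt_of_le_of_ne (mul_nonneg hV0 hML0) (Ne.symm hVM)
    set c₀ : ℝ := 2 * (V * M L) with hc₀def
    have hc₀ : 0 < c₀ := by positivity
    -- membership of c₀ in the set
    have hmem : ∫ x, Real.exp (f x ^ 2 / c₀ ^ 2) ∂μ ≤ 2 := by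
      set g : (Fin n → ℝ) → ℝ := fun x => Real.exp (f x ^ 2 / c₀ ^ 2) with hg
      have hgm : Measurable g := (((hfm.pow_const 2).div_const _)).exp
      by_cases hInt : Integrable g μ
      · -- sign-flip maps
        set sg : (Fin n → Bool) → (Fin n → ℝ) := fun ε i => if ε i then 1 else -1 with hsg
        have hsgpm : ∀ ε : Fin n → Bool, ∀ i, sg ε i = 1 ∨ sg ε i = -1 := by
          intro ε i
          by_cases h : ε i <;> simp [hsg, h]
        set T : (Fin n → Bool) → (Fin n → ℝ) → (Fin n → ℝ) :=
          fun ε x i => sg ε i * x i with hT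
        have hTm : ∀ ε, Measurable (T ε) := by
          intro ε
          exact measurable_pi_lambda _ fun i => (measurable_pi_apply i).const_mul _
        have hmapT : ∀ ε, Measure.map (T ε) μ = μ := fun ε => hunc (sg ε) (hsgpm ε)
        have hmapeq : ∀ ε, ∫ x, g x ∂μ = ∫ x, g (T ε x) ∂μ := by
          intro ε
          conv_lhs => rw [← hmapT ε]
          exact integral_map (hTm ε).aemeasurable hgm.aestronglyMeasurable
        have hIntε : ∀ ε, Integrable (fun x => g (T ε x)) μ := by
          intro ε
          have h1 : Integrable g (Measure.map (T ε) μ) := by rw [hmapT]; exact hInt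
          exact (integrable_map_measure hgm.aestronglyMeasurable
            (hTm ε).aemeasurable).mp h1
        -- a.e. pointwise bound for the sum over sign patterns
        have haeb : ∀ᵐ x ∂μ, (∑ ε : Fin n → Bool, g (T ε x)) ≤ 2 ^ n * 2 := by
          filter_upwards [hM L hLn] with x hx
          have hts : topSqSum x L ≤ (M L) ^ 2 := by
            have h0 : 0 ≤ topSqSum x L :=
              le_trans (Finset.sum_nonneg fun i _ => sq_nonneg _) (htop_ge x)
            calc topSqSum x L = Real.sqrt (topSqSum x L) ^ 2 := (Real.sq_sqrt h0).symm
              _ ≤ (M L) ^ 2 := pow_le_pow_left₀ (Real.sqrt_nonneg _) hx 2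
          have hσ : (∑ i, (v i * x i) ^ 2) ≤ c₀ ^ 2 / 4 := by
            have h1 : (∑ i, (v i * x i) ^ 2) = ∑ i ∈ I, (v i * x i) ^ 2 := by
              refine (Finset.sum_subset (Finset.subset_univ I) fun i _ hi => ?_).symm
              rw [hv i hi, zero_mul, zero_pow (by norm_num)]
            have h2 : (∑ i ∈ I, (v i * x i) ^ 2) ≤ V ^ 2 * ∑ i ∈ I, x i ^ 2 := by
              rw [Finset.mul_sum]
              refine Finset.sum_le_sum fun i _ => ?_
              have : (v i) ^ 2 ≤ V ^ 2 := by
                rw [← sq_abs]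
                exact pow_le_pow_left₀ (abs_nonneg _) (hVi i) 2
              rw [mul_pow]
              exact mul_le_mul_of_nonneg_right this (sq_nonneg _)
            have h3 : V ^ 2 * (∑ i ∈ I, x i ^ 2) ≤ V ^ 2 * (M L) ^ 2 :=
              mul_le_mul_of_nonneg_left (le_trans (htop_ge x) hts) (sq_nonneg _)
            have h4 : c₀ ^ 2 / 4 = V ^ 2 * (M L) ^ 2 := by
              rw [hc₀def]; ring
            rw [h1, h4]
            exact le_trans h2 h3
          have hRad := rademacher_avg n (fun i => v i * x i) c₀ hc₀ hσ
          refine le_trans (le_of_eq ?_) hRad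
          refine Finset.sum_congr rfl fun ε _ => ?_
          have hSeq : (∑ j, v j * (sg ε j * x j))
              = ∑ j, (if ε j = true then (1:ℝ) else -1) * (v j * x j) :=
            Finset.sum_congr rfl fun j _ => by simp only [hsg]; ring
          simp only [hg, hf, hT, hSeq]
        -- put it together
        have hkey : (2 ^ n : ℝ) * ∫ x, g x ∂μ ≤ 2 ^ n * 2 := by
          have h1 : (∑ ε : Fin n → Bool, ∫ x, g (T ε x) ∂μ)
              = (2 ^ n : ℝ) * ∫ x, g x ∂μ := by
            rw [Finset.sum_congr rfl (fun ε _ => (hmapeq ε).symm), Finset.sum_const]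
            simp [Fintype.card_fun]
          rw [← h1, ← integral_finset_sum _ (fun ε _ => hIntε ε)]
          calc (∫ x, ∑ ε : Fin n → Bool, g (T ε x) ∂μ)
              ≤ ∫ _, (2 ^ n * 2 : ℝ) ∂μ :=
                integral_mono_ae (integrable_finset_sum _ (fun ε _ => hIntε ε))
                  (integrable_const _) haeb
            _ = 2 ^ n * 2 := by simp
        have h2n : (0:ℝ) < 2 ^ n := by positivity
        calc ∫ x, Real.exp (f x ^ 2 / c₀ ^ 2) ∂μ = ∫ x, g x ∂μ := rfl
          _ ≤ 2 := by
            nlinarith [hkey]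
      · rw [integral_undef hInt]
        norm_num
    have hfinal : psiTwoNorm μ f ≤ c₀ :=
      csInf_le ⟨0, fun y hy => le_of_lt hy.1⟩ ⟨hc₀, hmem⟩
    calc psiTwoNorm μ f ≤ c₀ := hfinal
      _ = 2 * V * M L := by rw [hc₀def]; ring
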